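/- The two-barrier function G(·,·;β,γ) satisfies: (i) 𝒜G(x₁,x₂;β,γ) − δG(x₁,x₂;β,γ) = 0 for all x₁, x₂ > 0; (ii) ∂G/∂x₁ (βx₂, x₂; β,γ) = 1 for all x₂ > 0; and (iii) ∂G/∂x₁ (γx₂, x₂; β,γ) = κ for all x₂ > 0. -/

import Mathlib

lemma aux_hd {x : ℝ} (hx : x ≠ 0) (c p A : ℝ) :
    HasDerivAt (fun t : ℝ => c * t ^ p * A) (c * p * x ^ (p - 1) * A) x := by
  have h := ((Real.hasDerivAt_rpow_const (p := p) (Or.inl hx)).const_mul c).mul_const A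
  exact h.congr_deriv (by ring)

lemma aux_hd2 {x : ℝ} (hx : x ≠ 0) (c p : ℝ) :
    HasDerivAt (fun t : ℝ => c * t ^ p) (c * p * x ^ (p - 1)) x := by
  have h := (Real.hasDerivAt_rpow_const (p := p) (Or.inl hx)).const_mul c
  exact h.congr_deriv (by ring)


lemma rsplit1 {x : ℝ} (hx : 0 < x) {p q : ℝ} (h : q + 1 = p) : x ^ p = x ^ q * x := by
  rw [← h, Real.rpow_add hx, Real.rpow_one]

lemma rsplit2 {x : ℝ} (hx : 0 < x) {p q : ℝ} (h : q + 2 = p) : x ^ p = x ^ q * x ^ (2 : ℕ) := by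
  rw [← h, Real.rpow_add hx, show ((2:ℝ)) = ((2:ℕ):ℝ) by norm_num, Real.rpow_natCast]

/-- The generator 𝒜 of the bivariate geometric Brownian motion, acting on
`f : ℝ → ℝ → ℝ` at the point `(x₁, x₂)`. -/
noncomputable def gen (μA μL σA σL ρ : ℝ) (f : ℝ → ℝ → ℝ) (x₁ x₂ : ℝ) : ℝ :=
  μA * x₁ * deriv (fun t => f t x₂) x₁
  + μL * x₂ * deriv (fun t => f x₁ t) x₂
  + (1 / 2) * σA ^ 2 * x₁ ^ 2 * deriv (deriv (fun t => f t x₂)) x₁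
  + (1 / 2) * σL ^ 2 * x₂ ^ 2 * deriv (deriv (fun t => f x₁ t)) x₂
  + ρ * σA * σL * x₁ * x₂ * deriv (fun u => deriv (fun t => f t u) x₁) x₂

/-- The constant `C₁` of the two-barrier value function. -/
noncomputable def C1 (ζ₁ ζ₂ β γ κ : ℝ) : ℝ :=
  (1 - κ * β ^ (ζ₂ - 1) * γ ^ (1 - ζ₂)) /
    (ζ₁ * (β ^ (ζ₁ - 1) - γ ^ (ζ₁ - ζ₂) * β ^ (ζ₂ - 1)))

/-- The constant `C₂` of the two-barrier value function. -/
noncomputable def C2 (ζ₁ ζ₂ β γ κ : ℝ) : ℝ :=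
  (κ * γ ^ (1 - ζ₂) - C1 ζ₁ ζ₂ β γ κ * ζ₁ * γ ^ (ζ₁ - ζ₂)) / ζ₂

/-- The two-barrier value function `G(x₁, x₂; β, γ)` with dividend barrier `β`
and capital injection barrier `γ`. -/
noncomputable def G2 (ζ₁ ζ₂ β γ κ x₁ x₂ : ℝ) : ℝ :=
  C1 ζ₁ ζ₂ β γ κ * x₁ ^ ζ₁ * x₂ ^ (1 - ζ₁)
    + C2 ζ₁ ζ₂ β γ κ * x₁ ^ ζ₂ * x₂ ^ (1 - ζ₂)

/-- the two-barrier function `G(·,·;β,γ)` solves the generator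
equation, has unit marginal value at the dividend barrier `β`, and marginal
value `κ` at the capital injection barrier `γ`. -/
theorem stmt_12 (μA μL δ σA σL ρ ζ₁ ζ₂ β γ κ : ℝ)
    (hσA : 0 < σA) (hσL : 0 < σL) (hρ₁ : -1 < ρ) (hρ₂ : ρ < 1)
    (hμ : μL < μA) (hδ : μA < δ)
    (hroot₁ : (1 / 2) * (σA ^ 2 + σL ^ 2 - 2 * ρ * σA * σL) * ζ₁ * (ζ₁ - 1)
      + (μA - μL) * ζ₁ + (μL - δ) = 0)
    (hroot₂ : (1 / 2) * (σA ^ 2 + σL ^ 2 - 2 * ρ * σA * σL) * ζ₂ * (ζ₂ - 1)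
      + (μA - μL) * ζ₂ + (μL - δ) = 0)
    (hζlt : ζ₁ < ζ₂) (hζ₁ : ζ₁ < 0) (hζ₂ : 1 < ζ₂)
    (hγ : 0 < γ) (hβγ : γ < β) (hκ : 1 < κ) :
    (∀ x₁ x₂ : ℝ, 0 < x₁ → 0 < x₂ →
      gen μA μL σA σL ρ (fun a b => G2 ζ₁ ζ₂ β γ κ a b) x₁ x₂
        - δ * G2 ζ₁ ζ₂ β γ κ x₁ x₂ = 0) ∧
    (∀ x₂ : ℝ, 0 < x₂ → deriv (fun t => G2 ζ₁ ζ₂ β γ κ t x₂) (β * x₂) = 1) ∧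
    (∀ x₂ : ℝ, 0 < x₂ → deriv (fun t => G2 ζ₁ ζ₂ β γ κ t x₂) (γ * x₂) = κ) := by
  have hβ : 0 < β := hγ.trans hβγ
  set c1 := C1 ζ₁ ζ₂ β γ κ with hc1
  set c2 := C2 ζ₁ ζ₂ β γ κ with hc2
  -- derivative in the first variable, valid for any u and any x ≠ 0
  have hd1 : ∀ (u : ℝ) {x : ℝ}, x ≠ 0 →
      deriv (fun t => G2 ζ₁ ζ₂ β γ κ t u) x
        = c1 * ζ₁ * x ^ (ζ₁ - 1) * u ^ (1 - ζ₁)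
          + c2 * ζ₂ * x ^ (ζ₂ - 1) * u ^ (1 - ζ₂) := by
    intro u x hx
    exact ((aux_hd hx c1 ζ₁ _).add (aux_hd hx c2 ζ₂ _)).deriv
  refine ⟨?_, ?_, ?_⟩
  · -- the generator equation
    intro x₁ x₂ hx₁ hx₂
    have hx₁' : x₁ ≠ 0 := ne_of_gt hx₁
    have hx₂' : x₂ ≠ 0 := ne_of_gt hx₂
    -- first derivative in x₂
    have hd2 : deriv (fun t => G2 ζ₁ ζ₂ β γ κ x₁ t) x₂
        = c1 * x₁ ^ ζ₁ * (1 - ζ₁) * x₂ ^ (1 - ζ₁ - 1)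
          + c2 * x₁ ^ ζ₂ * (1 - ζ₂) * x₂ ^ (1 - ζ₂ - 1) :=
      ((aux_hd2 hx₂' (c1 * x₁ ^ ζ₁) (1 - ζ₁)).add
        (aux_hd2 hx₂' (c2 * x₁ ^ ζ₂) (1 - ζ₂))).deriv
    -- second derivative in x₁
    have hdd1 : deriv (deriv (fun t => G2 ζ₁ ζ₂ β γ κ t x₂)) x₁
        = c1 * ζ₁ * (ζ₁ - 1) * x₁ ^ (ζ₁ - 1 - 1) * x₂ ^ (1 - ζ₁)
          + c2 * ζ₂ * (ζ₂ - 1) * x₁ ^ (ζ₂ - 1 - 1) * x₂ ^ (1 - ζ₂) := by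
      have hev : deriv (fun t => G2 ζ₁ ζ₂ β γ κ t x₂) =ᶠ[nhds x₁]
          fun t => c1 * ζ₁ * t ^ (ζ₁ - 1) * x₂ ^ (1 - ζ₁)
            + c2 * ζ₂ * t ^ (ζ₂ - 1) * x₂ ^ (1 - ζ₂) := by
        filter_upwards [eventually_ne_nhds hx₁'] with t ht using hd1 x₂ ht
      rw [hev.deriv_eq]
      exact ((aux_hd hx₁' (c1 * ζ₁) (ζ₁ - 1) _).add
        (aux_hd hx₁' (c2 * ζ₂) (ζ₂ - 1) _)).deriv
    -- second derivative in x₂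
    have hdd2 : deriv (deriv (fun t => G2 ζ₁ ζ₂ β γ κ x₁ t)) x₂
        = c1 * x₁ ^ ζ₁ * (1 - ζ₁) * (1 - ζ₁ - 1) * x₂ ^ (1 - ζ₁ - 1 - 1)
          + c2 * x₁ ^ ζ₂ * (1 - ζ₂) * (1 - ζ₂ - 1) * x₂ ^ (1 - ζ₂ - 1 - 1) := by
      have hev : deriv (fun t => G2 ζ₁ ζ₂ β γ κ x₁ t) =ᶠ[nhds x₂]
          fun t => c1 * x₁ ^ ζ₁ * (1 - ζ₁) * t ^ (1 - ζ₁ - 1)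
            + c2 * x₁ ^ ζ₂ * (1 - ζ₂) * t ^ (1 - ζ₂ - 1) := by
        filter_upwards [eventually_ne_nhds hx₂'] with t ht
        exact ((aux_hd2 ht (c1 * x₁ ^ ζ₁) (1 - ζ₁)).add
          (aux_hd2 ht (c2 * x₁ ^ ζ₂) (1 - ζ₂))).deriv
      rw [hev.deriv_eq]
      exact ((aux_hd2 hx₂' (c1 * x₁ ^ ζ₁ * (1 - ζ₁)) (1 - ζ₁ - 1)).add
        (aux_hd2 hx₂' (c2 * x₁ ^ ζ₂ * (1 - ζ₂)) (1 - ζ₂ - 1))).deriv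
    -- mixed derivative
    have hdd12 : deriv (fun u => deriv (fun t => G2 ζ₁ ζ₂ β γ κ t u) x₁) x₂
        = c1 * ζ₁ * x₁ ^ (ζ₁ - 1) * (1 - ζ₁) * x₂ ^ (1 - ζ₁ - 1)
          + c2 * ζ₂ * x₁ ^ (ζ₂ - 1) * (1 - ζ₂) * x₂ ^ (1 - ζ₂ - 1) := by
      have hfun : (fun u => deriv (fun t => G2 ζ₁ ζ₂ β γ κ t u) x₁)
          = fun u => c1 * ζ₁ * x₁ ^ (ζ₁ - 1) * u ^ (1 - ζ₁)
            + c2 * ζ₂ * x₁ ^ (ζ₂ - 1) * u ^ (1 - ζ₂) := funext fun u => hd1 u hx₁'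
      rw [hfun]
      exact ((aux_hd2 hx₂' (c1 * ζ₁ * x₁ ^ (ζ₁ - 1)) (1 - ζ₁)).add
        (aux_hd2 hx₂' (c2 * ζ₂ * x₁ ^ (ζ₂ - 1)) (1 - ζ₂))).deriv
    simp only [gen]
    rw [hd1 x₂ hx₁', hd2, hdd1, hdd2, hdd12]
    -- rewrite all rpow exponents in terms of the lowest ones
    have E1a : x₁ ^ (ζ₁ - 1) = x₁ ^ (ζ₁ - 1 - 1) * x₁ := rsplit1 hx₁ (by ring)
    have E1b : x₁ ^ ζ₁ = x₁ ^ (ζ₁ - 1 - 1) * x₁ ^ (2 : ℕ) := rsplit2 hx₁ (by ring)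
    have E2a : x₁ ^ (ζ₂ - 1) = x₁ ^ (ζ₂ - 1 - 1) * x₁ := rsplit1 hx₁ (by ring)
    have E2b : x₁ ^ ζ₂ = x₁ ^ (ζ₂ - 1 - 1) * x₁ ^ (2 : ℕ) := rsplit2 hx₁ (by ring)
    have F1a : x₂ ^ (1 - ζ₁ - 1) = x₂ ^ (1 - ζ₁ - 1 - 1) * x₂ := rsplit1 hx₂ (by ring)
    have F1b : x₂ ^ (1 - ζ₁) = x₂ ^ (1 - ζ₁ - 1 - 1) * x₂ ^ (2 : ℕ) := rsplit2 hx₂ (by ring)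
    have F2a : x₂ ^ (1 - ζ₂ - 1) = x₂ ^ (1 - ζ₂ - 1 - 1) * x₂ := rsplit1 hx₂ (by ring)
    have F2b : x₂ ^ (1 - ζ₂) = x₂ ^ (1 - ζ₂ - 1 - 1) * x₂ ^ (2 : ℕ) := rsplit2 hx₂ (by ring)
    simp only [G2, ← hc1, ← hc2]
    rw [E1a, E1b, E2a, E2b, F1a, F1b, F2a, F2b]
    linear_combination
      (c1 * x₁ ^ (ζ₁ - 1 - 1) * x₁ ^ (2 : ℕ) * (x₂ ^ (1 - ζ₁ - 1 - 1) * x₂ ^ (2 : ℕ)))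
          * hroot₁
        + (c2 * x₁ ^ (ζ₂ - 1 - 1) * x₁ ^ (2 : ℕ) * (x₂ ^ (1 - ζ₂ - 1 - 1) * x₂ ^ (2 : ℕ)))
          * hroot₂
  · -- smooth fit at β
    intro x₂ hx₂
    have hx : (0 : ℝ) < β * x₂ := mul_pos hβ hx₂
    rw [hd1 x₂ (ne_of_gt hx), Real.mul_rpow hβ.le hx₂.le, Real.mul_rpow hβ.le hx₂.le]
    have e1 : x₂ ^ (ζ₁ - 1) * x₂ ^ (1 - ζ₁) = 1 := by
      rw [← Real.rpow_add hx₂]; norm_num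
    have e2 : x₂ ^ (ζ₂ - 1) * x₂ ^ (1 - ζ₂) = 1 := by
      rw [← Real.rpow_add hx₂]; norm_num
    have hζ₁0 : ζ₁ ≠ 0 := ne_of_lt hζ₁
    have hζ₂0 : ζ₂ ≠ 0 := by positivity
    have hβp : (0 : ℝ) < β ^ (ζ₂ - 1) := Real.rpow_pos_of_pos hβ _
    have hden : β ^ (ζ₁ - 1) - γ ^ (ζ₁ - ζ₂) * β ^ (ζ₂ - 1) ≠ 0 := by
      have hlt : β ^ (ζ₁ - ζ₂) < γ ^ (ζ₁ - ζ₂) :=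
        Real.rpow_lt_rpow_of_neg hγ hβγ (by linarith)
      have hsplit : β ^ (ζ₁ - 1) = β ^ (ζ₁ - ζ₂) * β ^ (ζ₂ - 1) := by
        rw [← Real.rpow_add hβ]; ring_nf
      rw [hsplit]
      have hmul : β ^ (ζ₁ - ζ₂) * β ^ (ζ₂ - 1) < γ ^ (ζ₁ - ζ₂) * β ^ (ζ₂ - 1) :=
        mul_lt_mul_of_pos_right hlt hβp
      exact sub_ne_zero.mpr (ne_of_lt hmul)
    have hden2 : ζ₁ * (β ^ (ζ₁ - 1) - γ ^ (ζ₁ - ζ₂) * β ^ (ζ₂ - 1)) ≠ 0 :=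
      mul_ne_zero hζ₁0 hden
    have hC1 : c1 * (ζ₁ * (β ^ (ζ₁ - 1) - γ ^ (ζ₁ - ζ₂) * β ^ (ζ₂ - 1)))
        = 1 - κ * β ^ (ζ₂ - 1) * γ ^ (1 - ζ₂) := by
      rw [hc1, C1]; exact div_mul_cancel₀ _ hden2
    have hC2 : c2 * ζ₂ = κ * γ ^ (1 - ζ₂) - c1 * ζ₁ * γ ^ (ζ₁ - ζ₂) := by
      rw [hc2, C2, ← hc1]; field_simp
    have goal' : c1 * ζ₁ * β ^ (ζ₁ - 1) + c2 * ζ₂ * β ^ (ζ₂ - 1) = 1 := by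
      linear_combination hC1 + β ^ (ζ₂ - 1) * hC2
    linear_combination (c1 * ζ₁ * β ^ (ζ₁ - 1)) * e1 + (c2 * ζ₂ * β ^ (ζ₂ - 1)) * e2 + goal'
  · -- smooth fit at γ
    intro x₂ hx₂
    have hx : (0 : ℝ) < γ * x₂ := mul_pos hγ hx₂
    rw [hd1 x₂ (ne_of_gt hx), Real.mul_rpow hγ.le hx₂.le, Real.mul_rpow hγ.le hx₂.le]
    have e1 : x₂ ^ (ζ₁ - 1) * x₂ ^ (1 - ζ₁) = 1 := by
      rw [← Real.rpow_add hx₂]; norm_num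
    have e2 : x₂ ^ (ζ₂ - 1) * x₂ ^ (1 - ζ₂) = 1 := by
      rw [← Real.rpow_add hx₂]; norm_num
    have hζ₂0 : ζ₂ ≠ 0 := by positivity
    have g1 : γ ^ (ζ₁ - 1) = γ ^ (ζ₁ - ζ₂) * γ ^ (ζ₂ - 1) := by
      rw [← Real.rpow_add hγ]; ring_nf
    have g2 : γ ^ (1 - ζ₂) * γ ^ (ζ₂ - 1) = 1 := by
      rw [← Real.rpow_add hγ]; norm_num
    have hC2 : c2 * ζ₂ = κ * γ ^ (1 - ζ₂) - c1 * ζ₁ * γ ^ (ζ₁ - ζ₂) := by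
      rw [hc2, C2, ← hc1]; field_simp
    have goal' : c1 * ζ₁ * γ ^ (ζ₁ - 1) + c2 * ζ₂ * γ ^ (ζ₂ - 1) = κ := by
      linear_combination γ ^ (ζ₂ - 1) * hC2 + (c1 * ζ₁) * g1 + κ * g2
    linear_combination (c1 * ζ₁ * γ ^ (ζ₁ - 1)) * e1 + (c2 * ζ₂ * γ ^ (ζ₂ - 1)) * e2 + goal'
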